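/- Let 𝒫_n ⊆ S_n be a union of conjugacy classes, let I ⊆ [n] with |I| = k, and for a permutation τ of I (regarded as a sequence, i.e., an ordering of the elements of I) set B(τ) = {φ ∈ 𝒫_n : φ(I) ∩ I = ∅ and φ contains τ as a subsequence}. Then for any two orderings τ₁, τ₂ of I, |B(τ₁)| = |B(τ₂)|. -/

import Mathlib

/-- `φ` contains the sequence `τ` (of `k` distinct elements of `[n]`) as a subsequence:
there are positions `i₁ < ⋯ < i_k` with `φ(i_j) = τ_j`. -/
def ContainsSeq {n k : ℕ} (φ : Equiv.Perm (Fin n)) (τ : Fin k → Fin n) : Prop :=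
  ∃ g : Fin k → Fin n, StrictMono g ∧ ∀ j, φ (g j) = τ j

lemma key_transfer {n k : ℕ} (I : Finset (Fin n)) (τ₁ τ₂ : Fin k → Fin n)
    (σ : Equiv.Perm (Fin n))
    (hfix : ∀ x, x ∉ I → σ x = x) (hτ : ∀ j, σ (τ₁ j) = τ₂ j)
    (hτ₁mem : ∀ j, τ₁ j ∈ I)
    (φ : Equiv.Perm (Fin n)) (hav : ∀ t ∈ I, φ t ∉ I) :
    (∀ t ∈ I, (σ * φ * σ⁻¹) t ∉ I) ∧
      (ContainsSeq φ τ₁ → ContainsSeq (σ * φ * σ⁻¹) τ₂) := by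
  have hfix' : ∀ x, x ∉ I → σ⁻¹ x = x := by
    intro x hx
    have := hfix x hx
    conv_lhs => rw [← this]
    simp
  have hinvI : ∀ t ∈ I, σ⁻¹ t ∈ I := by
    intro t ht
    by_contra h
    have h2 := hfix _ h
    rw [show σ (σ⁻¹ t) = t from σ.apply_symm_apply t] at h2
    exact h (h2 ▸ ht)
  constructor
  · intro t ht
    have h1 : σ⁻¹ t ∈ I := hinvI t ht
    have h2 : φ (σ⁻¹ t) ∉ I := hav _ h1
    have : (σ * φ * σ⁻¹) t = φ (σ⁻¹ t) := by
      simp only [Equiv.Perm.mul_apply, hfix _ h2]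
    rw [this]; exact h2
  · rintro ⟨g, hg, hgτ⟩
    refine ⟨g, hg, fun j => ?_⟩
    have hgI : g j ∉ I := by
      intro h
      exact hav _ h (hgτ j ▸ hτ₁mem j)
    simp [Equiv.Perm.mul_apply, hfix' _ hgI, hgτ j, hτ j]

theorem conjClosed_B_card_eq (n k : ℕ) (P : Finset (Equiv.Perm (Fin n)))
    (hconj : ∀ φ ∈ P, ∀ ψ : Equiv.Perm (Fin n), ψ * φ * ψ⁻¹ ∈ P)
    (I : Finset (Fin n)) (hI : I.card = k)
    (τ₁ τ₂ : Fin k → Fin n)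
    (hτ₁ : Function.Injective τ₁) (hτ₁I : ∀ x : Fin n, x ∈ I ↔ ∃ j, τ₁ j = x)
    (hτ₂ : Function.Injective τ₂) (hτ₂I : ∀ x : Fin n, x ∈ I ↔ ∃ j, τ₂ j = x) :
    Nat.card {φ : Equiv.Perm (Fin n) //
        φ ∈ P ∧ (∀ t ∈ I, φ t ∉ I) ∧ ContainsSeq φ τ₁} =
      Nat.card {φ : Equiv.Perm (Fin n) //
        φ ∈ P ∧ (∀ t ∈ I, φ t ∉ I) ∧ ContainsSeq φ τ₂} := by
  classical
  -- build equivalences Fin k ≃ I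
  have hτ₁mem : ∀ j, τ₁ j ∈ I := fun j => (hτ₁I _).2 ⟨j, rfl⟩
  have hτ₂mem : ∀ j, τ₂ j ∈ I := fun j => (hτ₂I _).2 ⟨j, rfl⟩
  let e₁ : Fin k ≃ {x : Fin n // x ∈ I} :=
    Equiv.ofBijective (fun j => ⟨τ₁ j, hτ₁mem j⟩)
      ⟨fun a b h => hτ₁ (by simpa using congrArg Subtype.val h),
       fun ⟨x, hx⟩ => by obtain ⟨j, hj⟩ := (hτ₁I x).1 hx; exact ⟨j, by simp [hj]⟩⟩
  let e₂ : Fin k ≃ {x : Fin n // x ∈ I} :=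
    Equiv.ofBijective (fun j => ⟨τ₂ j, hτ₂mem j⟩)
      ⟨fun a b h => hτ₂ (by simpa using congrArg Subtype.val h),
       fun ⟨x, hx⟩ => by obtain ⟨j, hj⟩ := (hτ₂I x).1 hx; exact ⟨j, by simp [hj]⟩⟩
  let π : Equiv.Perm {x : Fin n // x ∈ I} := e₁.symm.trans e₂
  let σ : Equiv.Perm (Fin n) := π.subtypeCongr (Equiv.refl _)
  have hfix : ∀ x, x ∉ I → σ x = x := fun x hx =>
    Equiv.Perm.subtypeCongr.right_apply π (Equiv.refl _) hx
  have hfix' : ∀ x, x ∉ I → σ⁻¹ x = x := by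
    intro x hx
    have := hfix x hx
    conv_lhs => rw [← this]
    simp
  have hτ : ∀ j, σ (τ₁ j) = τ₂ j := by
    intro j
    have : σ (τ₁ j) = (π ⟨τ₁ j, hτ₁mem j⟩ : Fin n) :=
      Equiv.Perm.subtypeCongr.left_apply π (Equiv.refl _) (hτ₁mem j)
    rw [this]
    have : π ⟨τ₁ j, hτ₁mem j⟩ = e₂ (e₁.symm (e₁ j)) := rfl
    rw [this, Equiv.symm_apply_apply]
    rfl
  have hτ' : ∀ j, σ⁻¹ (τ₂ j) = τ₁ j := by
    intro j
    rw [← hτ j]; simp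
  refine Nat.card_congr (Equiv.subtypeEquiv ((MulAut.conj σ).toEquiv) ?_)
  intro φ
  have hconjval : (MulAut.conj σ).toEquiv φ = σ * φ * σ⁻¹ := rfl
  rw [hconjval]
  constructor
  · rintro ⟨hP, hav, hc⟩
    obtain ⟨hav', hc'⟩ := key_transfer I τ₁ τ₂ σ hfix hτ hτ₁mem φ hav
    exact ⟨hconj φ hP σ, hav', hc' hc⟩
  · rintro ⟨hP, hav, hc⟩
    obtain ⟨hav', hc'⟩ := key_transfer I τ₂ τ₁ σ⁻¹ hfix' hτ' hτ₂mem (σ * φ * σ⁻¹) hav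
    have heq : σ⁻¹ * (σ * φ * σ⁻¹) * σ⁻¹⁻¹ = φ := by group
    have hP' : φ ∈ P := by
      have := hconj _ hP σ⁻¹
      rwa [heq] at this
    rw [heq] at hav' hc'
    exact ⟨hP', hav', hc' hc⟩
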